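/- Let σ be a page request sequence processed by the LRU policy with cache size k ≥ 1 starting from an empty cache. Suppose page p is requested at time s (so p belongs to LRU's cache immediately after time s) and that LRU evicts p at a fault occurring at a time t > s, with no request for p in between. Then among the requests σ_{s+1}, …, σ_t there are at least k distinct pages, all different from p. -/

import Mathlib

def lruStep (k : ℕ) (L : List ℕ) (p : ℕ) : List ℕ := (p :: L.erase p).take k

def lruCache (k : ℕ) (σ : ℕ → ℕ) : ℕ → List ℕ
  | 0 => []
  | t + 1 => lruStep k (lruCache k σ t) (σ t)

lemma lruCache_nodup (k : ℕ) (σ : ℕ → ℕ) (t : ℕ) : (lruCache k σ t).Nodup := by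
  induction t with
  | zero => simp [lruCache]
  | succ t ih =>
    simp only [lruCache, lruStep]
    refine List.Nodup.sublist (List.take_sublist _ _) ?_
    exact List.nodup_cons.mpr
      ⟨fun h => ((List.Nodup.mem_erase_iff ih).mp h).1 rfl, ih.erase _⟩

lemma lru_inv (k : ℕ) (hk : 1 ≤ k) (σ : ℕ → ℕ) (p s : ℕ) (hs : σ s = p) :
    ∀ u, s < u → (∀ v, s < v → v < u → σ v ≠ p) → p ∈ lruCache k σ u →
    ∃ A B, lruCache k σ u = A ++ p :: B ∧ ∀ q ∈ A, ∃ v, s < v ∧ v < u ∧ σ v = q := by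
  intro u
  induction u with
  | zero => intro h; omega
  | succ u ih =>
    intro hsu hbet hp
    rcases eq_or_lt_of_le (Nat.lt_succ_iff.mp hsu) with rfl | hsu'
    · -- base case u = s
      obtain ⟨k', rfl⟩ := Nat.exists_eq_succ_of_ne_zero (by omega : k ≠ 0)
      refine ⟨[], ((lruCache (k'+1) σ s).erase p).take k', ?_, by simp⟩
      simp [lruCache, lruStep, hs]
    · have hσu : σ u ≠ p := hbet u hsu' (Nat.lt_succ_self u)
      have hp' : p ∈ lruCache k σ u := by
        have h1 : p ∈ (σ u :: (lruCache k σ u).erase (σ u)).take k := by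
          simpa only [lruCache, lruStep] using hp
        have h2 := List.mem_of_mem_take h1
        rcases List.mem_cons.mp h2 with h | h
        · exact absurd h.symm hσu
        · exact List.mem_of_mem_erase h
      obtain ⟨A, B, hAB, hA⟩ :=
        ih hsu' (fun v hv hv' => hbet v hv (hv'.trans (Nat.lt_succ_self u))) hp'
      have hnd := lruCache_nodup k σ u
      rw [hAB] at hnd
      have hpA : p ∉ A := fun h =>
        (List.nodup_append.mp hnd).2.2 p h p List.mem_cons_self rfl
      obtain ⟨A', B', hA'sub, hEq⟩ :
          ∃ A' B', (∀ q ∈ A', q ∈ A) ∧ (lruCache k σ u).erase (σ u) = A' ++ p :: B' := by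
        rw [hAB]
        by_cases hmem : σ u ∈ A
        · exact ⟨A.erase (σ u), B, fun q hq => List.mem_of_mem_erase hq,
            by rw [List.erase_append_left _ hmem]⟩
        · refine ⟨A, B.erase (σ u), fun q hq => hq, ?_⟩
          rw [List.erase_append_right _ hmem, List.erase_cons_tail]
          simpa using fun h => hσu h.symm
      have hpA' : p ∉ A' := fun h => hpA (hA'sub _ h)
      have hcache : lruCache k σ (u+1) = ((σ u :: A') ++ p :: B').take k := by
        simp only [lruCache, lruStep, hEq, List.cons_append]
      have hlen : A'.length + 1 < k := by
        by_contra hle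
        push_neg at hle
        rw [hcache, List.take_append] at hp
        have h0 : k - (σ u :: A').length = 0 := by simp; omega
        rw [h0, List.take_zero, List.append_nil] at hp
        rcases List.mem_cons.mp (List.mem_of_mem_take hp) with h | h
        · exact hσu h.symm
        · exact hpA' h
      refine ⟨σ u :: A', B'.take (k - (A'.length + 2)), ?_, ?_⟩
      · rw [hcache, List.take_append,
          List.take_of_length_le (by simp; omega)]
        congr 1
        have h1 : k - (σ u :: A').length = (k - (A'.length + 2)) + 1 := by simp; omega
        rw [h1, List.take_succ_cons]
      · intro q hq
        rcases List.mem_cons.mp hq with rfl | hq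
        · exact ⟨u, hsu', Nat.lt_succ_self u, rfl⟩
        · obtain ⟨v, hv1, hv2, hv3⟩ := hA q (hA'sub q hq)
          exact ⟨v, hv1, hv2.trans (Nat.lt_succ_self u), hv3⟩

/-- Suppose page `p` is requested at time `s` (so `p` is in LRU's cache immediately after
time `s`), LRU (cache size `k ≥ 1`, empty initial cache) evicts `p` at a fault occurring
at time `t > s`, and `p` is not requested at any time strictly between `s` and `t`.
Then among the requests `σ (s+1), …, σ t` there are at least `k` distinct pages, all
different from `p`.  (Times are 0-based: the request at time `u` is `σ u`, it is a fault
when `σ u ∉ lruCache k σ u`, and the cache immediately after time `u` is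
`lruCache k σ (u+1)`.) -/
theorem stmt5 (k : ℕ) (hk : 1 ≤ k) (σ : ℕ → ℕ) (p s t : ℕ)
    (hs : σ s = p) (hst : s < t)
    (hfault : σ t ∉ lruCache k σ t)
    (hin : p ∈ lruCache k σ t) (hout : p ∉ lruCache k σ (t + 1))
    (hbetween : ∀ u, s < u → u < t → σ u ≠ p) :
    k ≤ (((Finset.Icc (s + 1) t).image σ).erase p).card := by
  obtain ⟨A, B, hAB, hA⟩ := lru_inv k hk σ p s hs t hst hbetween hin
  have hnd := lruCache_nodup k σ t
  rw [hAB] at hnd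
  have hpA : p ∉ A := fun h =>
    (List.nodup_append.mp hnd).2.2 p h p List.mem_cons_self rfl
  have hAnd : A.Nodup := (List.nodup_append.mp hnd).1
  have hσt : σ t ∉ A := fun h => hfault (by rw [hAB]; exact List.mem_append_left _ h)
  have hσtp : σ t ≠ p := fun h => hfault (h ▸ hin)
  have hcache : lruCache k σ (t+1) = ((σ t :: A) ++ p :: B).take k := by
    have hf' : σ t ∉ A ++ p :: B := hAB ▸ hfault
    simp only [lruCache, lruStep, hAB, List.erase_of_not_mem hf', List.cons_append]
  have hlen : k ≤ A.length + 1 := by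
    by_contra h
    push_neg at h
    apply hout
    rw [hcache, List.take_append]
    have h1 : k - (σ t :: A).length = (k - (A.length + 2)) + 1 := by simp; omega
    rw [h1, List.take_succ_cons]
    exact List.mem_append_right _ List.mem_cons_self
  have hsub : insert (σ t) A.toFinset ⊆ ((Finset.Icc (s + 1) t).image σ).erase p := by
    intro q hq
    rcases Finset.mem_insert.mp hq with rfl | hq
    · exact Finset.mem_erase.mpr ⟨hσtp,
        Finset.mem_image.mpr ⟨t, Finset.mem_Icc.mpr ⟨hst, le_refl t⟩, rfl⟩⟩
    · rw [List.mem_toFinset] at hq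
      obtain ⟨v, hv1, hv2, rfl⟩ := hA q hq
      exact Finset.mem_erase.mpr ⟨fun h => hpA (h ▸ hq),
        Finset.mem_image.mpr ⟨v, Finset.mem_Icc.mpr ⟨hv1, hv2.le⟩, rfl⟩⟩
  calc k ≤ A.length + 1 := hlen
    _ = (insert (σ t) A.toFinset).card := by
        rw [Finset.card_insert_of_notMem (by simpa using hσt),
          List.toFinset_card_of_nodup hAnd]
    _ ≤ _ := Finset.card_le_card hsub
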